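/- Let K ≥ 1, α ∈ (0,∞)^K with θ := ∑_{i=1}^K α_i, β > 0, and define h(z, m, s) := ∏_{i=1}^K h_{α_i}^C(z_i, m_i, s) for z ∈ (0,∞)^K, m ∈ ℕ^K, s ≥ 0. Then for all such z, m, s: ∂h/∂s (z, m, s) = ((θ+|m|)/(β+s)) h(z, m, s) − ∑_{i=1}^K ((α_i+m_i)/(β+s)) h(z, m+e_i, s), where |m| := ∑_i m_i, e_i is the i-th unit vector, and the s-derivative is the derivative of the smooth map s ↦ h(z,m,s) (defined for s > −β). This is the s-derivative identity used to verify the local duality in the proof of Theorem 4.1. -/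

import Mathlib

open Finset

/-- The gamma-type duality function `h_a^C(z, m, s)`. -/
noncomputable def hC (β a z : ℝ) (m : ℕ) (s : ℝ) : ℝ :=
  (Real.Gamma a / Real.Gamma (a + m)) * ((β + s) / β) ^ a * (β + s) ^ m * z ^ m *
    Real.exp (-s * z)

/-- The product duality function `h(z, m, s) = ∏ᵢ h_{αᵢ}^C(zᵢ, mᵢ, s)`. -/
noncomputable def Hprod {K : ℕ} (α : Fin K → ℝ) (β : ℝ)
    (z : Fin K → ℝ) (m : Fin K → ℕ) (s : ℝ) : ℝ :=
  ∏ i, hC β (α i) (z i) (m i) s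

lemma hC_hasDerivAt (β a z : ℝ) (m : ℕ) (s : ℝ) (hβ : 0 < β) (hx : 0 < β + s) :
    HasDerivAt (fun u => hC β a z m u)
      (((a + m) / (β + s) - z) * hC β a z m s) s := by
  have hxne : (β + s) ≠ 0 := ne_of_gt hx
  have hp : (0:ℝ) < (β + s) / β := div_pos hx hβ
  have h1 : HasDerivAt (fun u => (β + u) / β) (1 / β) s := by
    simpa using ((hasDerivAt_id s).const_add β).div_const β
  have h2 : HasDerivAt (fun u => ((β + u) / β) ^ a)
      (1 / β * a * ((β + s) / β) ^ (a - 1)) s :=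
    h1.rpow_const (Or.inl (ne_of_gt hp))
  have h3 : HasDerivAt (fun u => (β + u) ^ m)
      ((m : ℝ) * (β + s) ^ (m - 1) * 1) s :=
    ((hasDerivAt_id s).const_add β).pow m
  have h4 : HasDerivAt (fun u => Real.exp (-u * z)) (Real.exp (-s * z) * (-1 * z)) s :=
    (((hasDerivAt_id s).neg).mul_const z).exp
  have H := (((h2.fun_mul h3).fun_mul h4).const_mul (Real.Gamma a / Real.Gamma (a + m) * z ^ m))
  have heq : (fun u => Real.Gamma a / Real.Gamma (a + m) * z ^ m *
      ((((β + u) / β) ^ a * (β + u) ^ m) * Real.exp (-u * z))) = fun u => hC β a z m u := by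
    funext u; simp [hC]; ring
  rw [heq] at H
  refine H.congr_deriv ?_
  symm
  have hr : ((β + s) / β) ^ (a - 1) = ((β + s) / β) ^ a * (β / (β + s)) := by
    rw [Real.rpow_sub hp, Real.rpow_one]
    field_simp
  have hm : (m : ℝ) * (β + s) ^ (m - 1) = (m : ℝ) * ((β + s) ^ m / (β + s)) := by
    cases m with
    | zero => simp
    | succ n =>
      rw [pow_succ]
      field_simp
      simp
  rw [hr, hm]
  simp only [hC]
  generalize Real.Gamma a / Real.Gamma (a + (m:ℝ)) = G
  generalize ((β + s) / β) ^ a = P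
  field_simp
  ring

lemma hC_ratio (β a z s : ℝ) (m : ℕ) (ha : 0 < a) (hx : 0 < β + s) :
    (a + m) / (β + s) * hC β a z (m + 1) s = z * hC β a z m s := by
  have ham : (0:ℝ) < a + m := by positivity
  have hG : Real.Gamma (a + ((m : ℕ) + 1 : ℕ)) = (a + m) * Real.Gamma (a + m) := by
    push_cast
    rw [show a + ((m : ℝ) + 1) = (a + (m : ℝ)) + 1 by ring, Real.Gamma_add_one ham.ne']
  have hΓ : 0 < Real.Gamma (a + m) := Real.Gamma_pos_of_pos ham
  simp only [hC, hG, pow_succ]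
  field_simp

/-- The `s`-derivative identity used to verify the local duality in the proof of Theorem 4.1. -/
theorem stmt12 (K : ℕ) (hK : 1 ≤ K) (α : Fin K → ℝ) (hα : ∀ i, 0 < α i)
    (β : ℝ) (hβ : 0 < β) (m : Fin K → ℕ) (s : ℝ) (hs : 0 ≤ s)
    (z : Fin K → ℝ) (hz : ∀ i, 0 < z i) :
    deriv (fun u => Hprod α β z m u) s
      = ((∑ i, α i) + ∑ i, (m i : ℝ)) / (β + s) * Hprod α β z m s
        - ∑ i, (α i + m i) / (β + s) * Hprod α β z (m + Pi.single i 1) s := by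
  have hx : 0 < β + s := by linarith
  have hd : ∀ i ∈ (univ : Finset (Fin K)), HasDerivAt (fun u => hC β (α i) (z i) (m i) u)
      (((α i + m i) / (β + s) - z i) * hC β (α i) (z i) (m i) s) s :=
    fun i _ => hC_hasDerivAt β (α i) (z i) (m i) s hβ hx
  have H := HasDerivAt.fun_finsetProd hd
  have hder : deriv (fun u => Hprod α β z m u) s
      = ∑ i, (∏ j ∈ univ.erase i, hC β (α j) (z j) (m j) s) *
          (((α i + m i) / (β + s) - z i) * hC β (α i) (z i) (m i) s) := by
    have := H.deriv
    simp only [smul_eq_mul] at this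
    rw [← this]
    rfl
  have hterm : ∀ i, (∏ j ∈ univ.erase i, hC β (α j) (z j) (m j) s) *
      (((α i + m i) / (β + s) - z i) * hC β (α i) (z i) (m i) s)
      = ((α i + m i) / (β + s) - z i) * Hprod α β z m s := by
    intro i
    rw [Hprod, ← Finset.mul_prod_erase univ _ (mem_univ i)]
    ring
  have hratio : ∀ i, (α i + m i) / (β + s) * Hprod α β z (m + Pi.single i 1) s
      = z i * Hprod α β z m s := by
    intro i
    rw [Hprod, Hprod, ← Finset.mul_prod_erase univ _ (mem_univ i),
      ← Finset.mul_prod_erase univ _ (mem_univ i)]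
    have he : ∏ j ∈ univ.erase i, hC β (α j) (z j) ((m + Pi.single i 1 : Fin K → ℕ) j) s
        = ∏ j ∈ univ.erase i, hC β (α j) (z j) (m j) s := by
      refine Finset.prod_congr rfl fun j hj => ?_
      have hji : j ≠ i := (Finset.mem_erase.mp hj).1
      simp [Pi.single_eq_of_ne hji]
    have hi : (m + Pi.single i 1 : Fin K → ℕ) i = m i + 1 := by simp
    rw [he, hi, ← mul_assoc, ← mul_assoc, hC_ratio β (α i) (z i) s (m i) (hα i) hx]
  rw [hder]
  simp only [hterm, hratio]
  rw [Finset.sum_congr rfl fun i _ => sub_mul ((α i + m i) / (β + s)) (z i) _,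
    Finset.sum_sub_distrib]
  congr 1
  rw [← Finset.sum_mul, ← Finset.sum_div, Finset.sum_add_distrib]
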